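/- Let A be a complex Banach *-algebra with identity and a ∈ A. Suppose a = x + y where x is core invertible, y is quasinilpotent, x* y = 0, and y x = 0. Then a has a generalized core-EP inverse, namely x^#: i.e., x^# = a (x^#)², (a x^#)* = a x^#, and lim_{n→∞} ‖aⁿ - x^# a^{n+1}‖^{1/n} = 0. -/

import Mathlib

open Filter Topology

variable {A : Type*} [NormedRing A] [StarRing A] [NormedAlgebra ℂ A] [StarModule ℂ A]
  [CompleteSpace A]

/-- quasinilpotent: `lim ‖z^n‖^(1/n) = 0` -/
def IsQNil (z : A) : Prop :=
  Tendsto (fun n : ℕ => ‖z ^ n‖ ^ ((1 : ℝ) / n)) atTop (𝓝 0)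

/-- generalized Drazin inverse -/
def IsGD (a x : A) : Prop :=
  a * x ^ 2 = x ∧ a * x = x * a ∧ IsQNil (a - a ^ 2 * x)

/-- generalized core-EP inverse -/
def IsGCEP (a x : A) : Prop :=
  x = a * x ^ 2 ∧ star (a * x) = a * x ∧
    Tendsto (fun n : ℕ => ‖a ^ n - x * a ^ (n + 1)‖ ^ ((1 : ℝ) / n)) atTop (𝓝 0)

/-- left multiplication preserves quasinilpotent-type convergence -/
lemma qnil_mul_left {y : A} (hy : IsQNil y) (b : A) :
    Tendsto (fun n : ℕ => ‖b * y ^ n‖ ^ ((1 : ℝ) / n)) atTop (𝓝 0) := by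
  have hb : (0 : ℝ) < ‖b‖ + 1 := by positivity
  have h1 : Tendsto (fun n : ℕ => (‖b‖ + 1) ^ ((1 : ℝ) / n)) atTop (𝓝 1) := by
    have h0 : Tendsto (fun n : ℕ => (1 : ℝ) / n) atTop (𝓝 0) :=
      tendsto_one_div_atTop_nhds_zero_nat
    have := (Real.continuousAt_const_rpow (b := (0:ℝ)) hb.ne').tendsto.comp h0
    simpa [Real.rpow_zero, Function.comp_def] using this
  have hupper : Tendsto (fun n : ℕ =>
      (‖b‖ + 1) ^ ((1 : ℝ) / n) * ‖y ^ n‖ ^ ((1 : ℝ) / n)) atTop (𝓝 0) := by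
    simpa using h1.mul hy
  refine squeeze_zero (fun n => Real.rpow_nonneg (norm_nonneg _) _) (fun n => ?_) hupper
  rw [← Real.mul_rpow (le_of_lt hb) (norm_nonneg _)]
  refine Real.rpow_le_rpow (norm_nonneg _) ?_ (by positivity)
  calc ‖b * y ^ n‖ ≤ ‖b‖ * ‖y ^ n‖ := norm_mul_le _ _
    _ ≤ (‖b‖ + 1) * ‖y ^ n‖ := by nlinarith [norm_nonneg (y ^ n)]

theorem stmt19 (a x y c : A) (ha : a = x + y)
    (h1 : c * x * c = c) (h2 : x * c * x = x) (h3 : star (x * c) = x * c)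
    (h4 : c * x ^ 2 = x) (h5 : x * c ^ 2 = c) (h6 : ∃ z, c = x * z)
    (hy : IsQNil y) (ho1 : star x * y = 0) (ho2 : y * x = 0) :
    IsGCEP a c := by
  obtain ⟨z, hz⟩ := h6
  have hyc : y * c = 0 := by rw [hz, ← mul_assoc, ho2, zero_mul]
  have part1 : c = a * c ^ 2 := by
    have hyc2 : y * c ^ 2 = 0 := by rw [sq, ← mul_assoc, hyc, zero_mul]
    rw [ha, add_mul, hyc2, add_zero, h5]
  have part2 : a * c = x * c := by rw [ha, add_mul, hyc, add_zero]
  have key : (1 - c * a) * x = 0 := by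
    have hax : a * x = x ^ 2 := by rw [ha, add_mul, ho2, add_zero, sq]
    rw [sub_mul, one_mul, mul_assoc, hax, h4, sub_self]
  have keyn : ∀ n : ℕ, (1 - c * a) * (y ^ n * x) = 0 := by
    intro n
    cases n with
    | zero => simpa using key
    | succ m =>
        rw [pow_succ, mul_assoc, ho2, mul_zero, mul_zero]
  have formula : ∀ n : ℕ, a ^ n - c * a ^ (n + 1) = (1 - c * a) * y ^ n := by
    intro n
    induction n with
    | zero => simp
    | succ n ih =>
        have e1 : a ^ (n + 1) - c * a ^ (n + 2) = (a ^ n - c * a ^ (n + 1)) * a := by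
          rw [sub_mul, ← pow_succ, mul_assoc, ← pow_succ]
        rw [e1, ih, mul_assoc]
        have : y ^ n * a = y ^ n * x + y ^ (n + 1) := by
          rw [ha, mul_add, pow_succ]
        rw [this, mul_add, keyn, zero_add]
  refine ⟨part1, by rw [part2, h3], ?_⟩
  have := qnil_mul_left hy (1 - c * a)
  refine this.congr fun n => ?_
  rw [← formula]
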